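/- arXiv:1810.00176 — 2 statements merged into one kernel-verified Lean document; each statement's English description precedes it below -/
import Mathlib

section
/- Let R = ℤ[s, s⁻¹, t, t⁻¹] and consider the free R-module with basis {u, v, w}. The quotient of R·u ⊕ R·v ⊕ R·w by the submodule generated by (1−t)u + v + (1−s)w, (1−t)u + v, v + (1−s)w, (1−s+s²)u, (1+st)v, and (1−t+t²)w is isomorphic to R/(R(1−s+s²)+R(1−t)) ⊕ R/(R(1−s)+R(1−t+t²)); in particular its underlying additive group is free abelian of rank 4. -/
/-- `R = ℤ[s,s⁻¹,t,t⁻¹]`, the group ring of the free abelian group with basis `{s, t}`. -/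
noncomputable abbrev GroupRingZ2 : Type := AddMonoidAlgebra ℤ (ℤ × ℤ)

open AddMonoidAlgebra Polynomial

noncomputable def unitOf (x : ℤ × ℤ) : GroupRingZ2ˣ :=
  ⟨AddMonoidAlgebra.single x 1, AddMonoidAlgebra.single (-x) 1,
    by rw [AddMonoidAlgebra.single_mul_single]; simp [AddMonoidAlgebra.one_def],
    by rw [AddMonoidAlgebra.single_mul_single]; simp [AddMonoidAlgebra.one_def]⟩

lemma unitOf_zpow (x : ℤ × ℤ) (a : ℤ) :
    ((unitOf x ^ a : GroupRingZ2ˣ) : GroupRingZ2) = AddMonoidAlgebra.single (a • x) 1 := by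
  have hpow : ∀ n : ℕ, ((unitOf x ^ n : GroupRingZ2ˣ) : GroupRingZ2)
      = AddMonoidAlgebra.single ((n : ℤ) • x) 1 := by
    intro n
    rw [Units.val_pow_eq_pow_val]
    show (AddMonoidAlgebra.single x 1) ^ n = _
    rw [AddMonoidAlgebra.single_pow]
    simp [natCast_zsmul]
  cases a with
  | ofNat n => simpa using hpow n
  | negSucc n =>
      rw [zpow_negSucc]
      refine Units.inv_eq_of_mul_eq_one_right ?_
      rw [hpow (n + 1), AddMonoidAlgebra.single_mul_single]
      have h0 : ((n + 1 : ℕ) : ℤ) • x + Int.negSucc n • x = 0 := by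
        rw [← add_smul]
        have : ((n + 1 : ℕ) : ℤ) + Int.negSucc n = 0 := by
          simp [Int.negSucc_eq]
        rw [this, zero_smul]
      rw [h0]
      simp [AddMonoidAlgebra.one_def]

/-- the polynomial `X² - X + 1` over `ℤ` -/
noncomputable def qPol : ℤ[X] := X ^ 2 - X + 1

lemma qPol_monic : qPol.Monic := by unfold qPol; monicity!

lemma qPol_natDegree : qPol.natDegree = 2 := by unfold qPol; compute_degree!

noncomputable abbrev AR : Type := AdjoinRoot qPol

lemma AR_root_rel : (AdjoinRoot.root qPol) ^ 2 - AdjoinRoot.root qPol + 1 = 0 := by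
  have h := AdjoinRoot.eval₂_root qPol
  unfold qPol at h
  simp at h; exact h

/-- root as a unit of `AR` -/
noncomputable def uRoot : ARˣ :=
  ⟨AdjoinRoot.root qPol, 1 - AdjoinRoot.root qPol,
    by linear_combination -AR_root_rel, by linear_combination -AR_root_rel⟩

/-- lift to `AR` sending `single g 1` to `uRoot ^ π g` -/
noncomputable def Fmap (π : (ℤ × ℤ) →+ ℤ) : GroupRingZ2 →ₐ[ℤ] AR :=
  AddMonoidAlgebra.lift ℤ AR (ℤ × ℤ) ((Units.coeHom AR).comp
    { toFun := fun g => uRoot ^ (π (Multiplicative.toAdd g))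
      map_one' := by simp
      map_mul' := fun a b => by
        show uRoot ^ (π (Multiplicative.toAdd (a * b)))
          = uRoot ^ (π (Multiplicative.toAdd a)) * uRoot ^ (π (Multiplicative.toAdd b))
        rw [toAdd_mul, map_add, zpow_add] })

lemma Fmap_single (π : (ℤ × ℤ) →+ ℤ) (g : ℤ × ℤ) :
    Fmap π (AddMonoidAlgebra.single g (1 : ℤ)) = ((uRoot ^ π g : ARˣ) : AR) := by
  rw [Fmap, AddMonoidAlgebra.lift_single]
  simp

lemma quotRingEquiv (x y : ℤ × ℤ) (π σ : (ℤ × ℤ) →+ ℤ) (hπx : π x = 1) (hπy : π y = 0)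
    (hbasis : ∀ g : ℤ × ℤ, π g • x + σ g • y = g) :
    Nonempty ((GroupRingZ2 ⧸ Ideal.span {1 - AddMonoidAlgebra.single x 1
        + (AddMonoidAlgebra.single x (1:ℤ)) ^ 2, 1 - AddMonoidAlgebra.single y 1}) ≃+* AR) := by
  set X : GroupRingZ2 := AddMonoidAlgebra.single x 1 with hX
  set Y : GroupRingZ2 := AddMonoidAlgebra.single y 1 with hY
  set I : Ideal GroupRingZ2 := Ideal.span {1 - X + X ^ 2, 1 - Y} with hI
  have hXI : Ideal.Quotient.mk I (1 - X + X ^ 2) = 0 :=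
    Ideal.Quotient.eq_zero_iff_mem.2 (Ideal.subset_span (by simp))
  have hYI : Ideal.Quotient.mk I (1 - Y) = 0 :=
    Ideal.Quotient.eq_zero_iff_mem.2 (Ideal.subset_span (by simp))
  have hmkY : Ideal.Quotient.mk I Y = 1 := by
    rw [map_sub, map_one, sub_eq_zero] at hYI; exact hYI.symm
  have hFX : Fmap π X = AdjoinRoot.root qPol := by
    rw [hX, Fmap_single, hπx, zpow_one]; rfl
  have hFY : Fmap π Y = 1 := by
    rw [hY, Fmap_single, hπy, zpow_zero]; rfl
  have hker : ∀ a ∈ I, (Fmap π).toRingHom a = 0 := by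
    intro a ha
    rw [← RingHom.mem_ker]
    revert a ha
    rw [← SetLike.le_def, hI, Ideal.span_le]
    rintro a ha
    simp only [Set.mem_insert_iff, Set.mem_singleton_iff] at ha
    rcases ha with rfl | rfl <;>
      simp only [SetLike.mem_coe, RingHom.mem_ker, AlgHom.toRingHom_eq_coe,
        RingHom.coe_coe, map_add, map_sub, map_one, map_pow, hFX, hFY]
    · linear_combination AR_root_rel
    · ring
  set Fbar : (GroupRingZ2 ⧸ I) →+* AR := Ideal.Quotient.lift I (Fmap π).toRingHom hker with hFbar
  have hlift : Polynomial.eval₂ (Int.castRingHom (GroupRingZ2 ⧸ I))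
      (Ideal.Quotient.mk I X) qPol = 0 := by
    unfold qPol
    simp only [Polynomial.eval₂_add, Polynomial.eval₂_sub, Polynomial.eval₂_pow,
      Polynomial.eval₂_X, Polynomial.eval₂_one]
    calc (Ideal.Quotient.mk I X) ^ 2 - Ideal.Quotient.mk I X + 1
        = Ideal.Quotient.mk I (1 - X + X ^ 2) := by rw [map_add, map_sub, map_one, map_pow]; ring
      _ = 0 := hXI
  set G : AR →+* (GroupRingZ2 ⧸ I) :=
    AdjoinRoot.lift (Int.castRingHom _) (Ideal.Quotient.mk I X) hlift with hG
  have hGroot : G (AdjoinRoot.root qPol) = Ideal.Quotient.mk I X := AdjoinRoot.lift_root hlift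
  -- units
  have hUmap : Units.map (G : AR →* (GroupRingZ2 ⧸ I)) uRoot
      = Units.map (Ideal.Quotient.mk I : GroupRingZ2 →* (GroupRingZ2 ⧸ I)) (unitOf x) := by
    apply Units.ext
    simpa [unitOf, uRoot] using hGroot
  have hUY1 : Units.map (Ideal.Quotient.mk I : GroupRingZ2 →* (GroupRingZ2 ⧸ I)) (unitOf y)
      = 1 := by
    apply Units.ext
    simpa [unitOf] using hmkY
  have key : ∀ g : ℤ × ℤ, G ((Fmap π) (AddMonoidAlgebra.single g (1:ℤ)))
      = Ideal.Quotient.mk I (AddMonoidAlgebra.single g 1) := by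
    intro g
    have hrhs : (AddMonoidAlgebra.single g (1:ℤ) : GroupRingZ2)
        = ((unitOf x ^ π g * unitOf y ^ σ g : GroupRingZ2ˣ) : GroupRingZ2) := by
      rw [Units.val_mul, unitOf_zpow, unitOf_zpow, AddMonoidAlgebra.single_mul_single,
        one_mul, hbasis g]
    have hl : G ((uRoot ^ π g : ARˣ) : AR)
        = ((Units.map (G : AR →* (GroupRingZ2 ⧸ I)) uRoot ^ π g : (GroupRingZ2 ⧸ I)ˣ)
            : GroupRingZ2 ⧸ I) := by
      rw [← map_zpow]
      exact (Units.coe_map _ _).symm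
    have hr : (Ideal.Quotient.mk I) ((unitOf x ^ π g * unitOf y ^ σ g : GroupRingZ2ˣ)
          : GroupRingZ2)
        = ((Units.map (Ideal.Quotient.mk I : GroupRingZ2 →* (GroupRingZ2 ⧸ I)) (unitOf x) ^ π g
            : (GroupRingZ2 ⧸ I)ˣ) : GroupRingZ2 ⧸ I) := by
      have h := Units.coe_map (Ideal.Quotient.mk I : GroupRingZ2 →* (GroupRingZ2 ⧸ I))
        (unitOf x ^ π g * unitOf y ^ σ g)
      rw [map_mul, map_zpow, map_zpow, hUY1, one_zpow, mul_one] at h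
      exact h.symm
    rw [Fmap_single, hrhs, hl, hr, hUmap]
  have h1 : G.comp Fbar = RingHom.id _ := by
    apply Ideal.Quotient.ringHom_ext
    apply AddMonoidAlgebra.ringHom_ext
    · intro b
      have hb : (AddMonoidAlgebra.single (0 : ℤ × ℤ) b : GroupRingZ2) = b • 1 := by
        simp [AddMonoidAlgebra.one_def]
      simp only [RingHom.comp_apply, hb, map_zsmul, map_one, RingHom.id_apply]
    · intro g
      simp only [RingHom.comp_apply, RingHom.id_apply, hFbar, Ideal.Quotient.lift_mk]
      exact key g
  have h2 : Fbar.comp G = RingHom.id AR := by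
    have halg : (Fbar.comp G).toIntAlgHom = (RingHom.id AR).toIntAlgHom := by
      apply AdjoinRoot.algHom_ext
      show Fbar (G (AdjoinRoot.root qPol)) = AdjoinRoot.root qPol
      rw [hGroot]
      show (Fmap π).toRingHom X = AdjoinRoot.root qPol
      exact hFX
    exact RingHom.ext fun z => DFunLike.congr_fun halg z
  exact ⟨RingEquiv.ofRingHom Fbar G h2 h1⟩


/-- The generator `s` of the group ring. -/
noncomputable def sGen : GroupRingZ2 := AddMonoidAlgebra.single (1, 0) 1

/-- The generator `t` of the group ring. -/
noncomputable def tGen : GroupRingZ2 := AddMonoidAlgebra.single (0, 1) 1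

/-- Basis vector `u` of `R³`. -/
noncomputable def uV : Fin 3 → GroupRingZ2 := Pi.single 0 1
/-- Basis vector `v` of `R³`. -/
noncomputable def vV : Fin 3 → GroupRingZ2 := Pi.single 1 1
/-- Basis vector `w` of `R³`. -/
noncomputable def wV : Fin 3 → GroupRingZ2 := Pi.single 2 1

/-- The submodule of `R³` generated by the six rows of the second differential for the
Artin group of type `F₄`. -/
noncomputable def imF4 : Submodule GroupRingZ2 (Fin 3 → GroupRingZ2) :=
  Submodule.span GroupRingZ2
    {(1 - tGen) • uV + vV + (1 - sGen) • wV, (1 - tGen) • uV + vV, vV + (1 - sGen) • wV,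
      (1 - sGen + sGen ^ 2) • uV, (1 + sGen * tGen) • vV, (1 - tGen + tGen ^ 2) • wV}

set_option maxHeartbeats 2000000 in
/-- Let `R = ℤ[s,s⁻¹,t,t⁻¹]` and let `u, v, w` be a basis of the free `R`-module `R³`.
The quotient of `R³` by the submodule generated by `(1−t)u + v + (1−s)w`, `(1−t)u + v`,
`v + (1−s)w`, `(1−s+s²)u`, `(1+st)v` and `(1−t+t²)w` is isomorphic to
`R/(R(1−s+s²)+R(1−t)) ⊕ R/(R(1−s)+R(1−t+t²))`; in particular its underlying additive
group is free abelian of rank 4.  (Type `F₄`.) -/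
theorem quotient_F4 :
    Nonempty
        (((Fin 3 → GroupRingZ2) ⧸ imF4) ≃ₗ[GroupRingZ2]
          ((GroupRingZ2 ⧸ Ideal.span {1 - sGen + sGen ^ 2, 1 - tGen}) ×
            (GroupRingZ2 ⧸ Ideal.span {1 - sGen, 1 - tGen + tGen ^ 2}))) ∧
      Module.Free ℤ ((Fin 3 → GroupRingZ2) ⧸ imF4) ∧
      Module.rank ℤ ((Fin 3 → GroupRingZ2) ⧸ imF4) = 4 := by
  classical
  set I₁ : Ideal GroupRingZ2 := Ideal.span {1 - sGen + sGen ^ 2, 1 - tGen} with hI₁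
  set I₂ : Ideal GroupRingZ2 := Ideal.span {1 - sGen, 1 - tGen + tGen ^ 2} with hI₂
  -- membership lemmas
  have hg1 : (1 - tGen) • uV + vV + (1 - sGen) • wV ∈ imF4 :=
    Submodule.subset_span (Set.mem_insert _ _)
  have hg2 : (1 - tGen) • uV + vV ∈ imF4 :=
    Submodule.subset_span (Set.mem_insert_of_mem _ (Set.mem_insert _ _))
  have hg3 : vV + (1 - sGen) • wV ∈ imF4 :=
    Submodule.subset_span (Set.mem_insert_of_mem _ (Set.mem_insert_of_mem _ (Set.mem_insert _ _)))
  have hg4 : (1 - sGen + sGen ^ 2) • uV ∈ imF4 :=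
    Submodule.subset_span (Set.mem_insert_of_mem _ (Set.mem_insert_of_mem _
      (Set.mem_insert_of_mem _ (Set.mem_insert _ _))))
  have hg6 : (1 - tGen + tGen ^ 2) • wV ∈ imF4 :=
    Submodule.subset_span (Set.mem_insert_of_mem _ (Set.mem_insert_of_mem _
      (Set.mem_insert_of_mem _ (Set.mem_insert_of_mem _
        (Set.mem_insert_of_mem _ (Set.mem_singleton _))))))
  have htu : (1 - tGen) • uV ∈ imF4 := by
    have h : (1 - tGen) • uV = ((1 - tGen) • uV + vV + (1 - sGen) • wV) - (vV + (1 - sGen) • wV) := by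
      abel
    rw [h]; exact sub_mem hg1 hg3
  have hv : vV ∈ imF4 := by
    have h : vV = ((1 - tGen) • uV + vV) - (1 - tGen) • uV := by abel
    rw [h]; exact sub_mem hg2 htu
  have hsw : (1 - sGen) • wV ∈ imF4 := by
    have h : (1 - sGen) • wV = (vV + (1 - sGen) • wV) - vV := by abel
    rw [h]; exact sub_mem hg3 hv
  have huMem : ∀ r ∈ I₁, r • uV ∈ imF4 := by
    intro r hr
    have hle : I₁ ≤ Submodule.comap (LinearMap.toSpanSingleton GroupRingZ2 _ uV) imF4 := by
      rw [hI₁, Ideal.span_le]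
      rintro z hz
      simp only [Set.mem_insert_iff, Set.mem_singleton_iff] at hz
      rcases hz with rfl | rfl <;>
        simp only [SetLike.mem_coe, Submodule.mem_comap, LinearMap.toSpanSingleton_apply]
      · exact hg4
      · exact htu
    exact hle hr
  have hwMem : ∀ r ∈ I₂, r • wV ∈ imF4 := by
    intro r hr
    have hle : I₂ ≤ Submodule.comap (LinearMap.toSpanSingleton GroupRingZ2 _ wV) imF4 := by
      rw [hI₂, Ideal.span_le]
      rintro z hz
      simp only [Set.mem_insert_iff, Set.mem_singleton_iff] at hz
      rcases hz with rfl | rfl <;>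
        simp only [SetLike.mem_coe, Submodule.mem_comap, LinearMap.toSpanSingleton_apply]
      · exact hsw
      · exact hg6
    exact hle hr
  -- the linear map to the product
  set Φ : (Fin 3 → GroupRingZ2) →ₗ[GroupRingZ2]
      (GroupRingZ2 ⧸ I₁) × (GroupRingZ2 ⧸ I₂) :=
    LinearMap.prod (I₁.mkQ.comp (LinearMap.proj 0)) (I₂.mkQ.comp (LinearMap.proj 2)) with hΦ
  have hΦapp : ∀ x : Fin 3 → GroupRingZ2, Φ x = (I₁.mkQ (x 0), I₂.mkQ (x 2)) := fun x => rfl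
  have hker : LinearMap.ker Φ = imF4 := by
    apply le_antisymm
    · intro z hz
      rw [LinearMap.mem_ker, hΦapp, Prod.mk_eq_zero] at hz
      obtain ⟨h0, h2⟩ := hz
      rw [Submodule.mkQ_apply, Submodule.Quotient.mk_eq_zero] at h0 h2
      have hdecomp : z = z 0 • uV + z 1 • vV + z 2 • wV := by
        funext i
        fin_cases i <;> simp [uV, vV, wV]
      rw [hdecomp]
      exact add_mem (add_mem (huMem _ h0) (Submodule.smul_mem _ _ hv)) (hwMem _ h2)
    · rw [imF4, Submodule.span_le]
      rintro z hz
      simp only [Set.mem_insert_iff, Set.mem_singleton_iff] at hz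
      have m1 : (1 - tGen) ∈ I₁ :=
        Ideal.subset_span (Set.mem_insert_of_mem _ (Set.mem_singleton _))
      have m1' : (1 - sGen + sGen ^ 2) ∈ I₁ := Ideal.subset_span (Set.mem_insert _ _)
      have m2 : (1 - sGen) ∈ I₂ := Ideal.subset_span (Set.mem_insert _ _)
      have m2' : (1 - tGen + tGen ^ 2) ∈ I₂ :=
        Ideal.subset_span (Set.mem_insert_of_mem _ (Set.mem_singleton _))
      have hu0 : uV 0 = 1 := Pi.single_eq_same 0 1
      have hu2 : uV 2 = 0 := Pi.single_eq_of_ne (by decide) 1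
      have hv0 : vV 0 = 0 := Pi.single_eq_of_ne (by decide) 1
      have hv2 : vV 2 = 0 := Pi.single_eq_of_ne (by decide) 1
      have hw0 : wV 0 = 0 := Pi.single_eq_of_ne (by decide) 1
      have hw2 : wV 2 = 1 := Pi.single_eq_same 2 1
      rcases hz with rfl | rfl | rfl | rfl | rfl | rfl <;>
        · rw [SetLike.mem_coe, LinearMap.mem_ker, hΦapp, Prod.mk_eq_zero,
            Submodule.mkQ_apply, Submodule.mkQ_apply, Submodule.Quotient.mk_eq_zero,
            Submodule.Quotient.mk_eq_zero]
          constructor <;>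
            · simp only [Pi.add_apply, Pi.smul_apply, hu0, hu2, hv0, hv2, hw0, hw2,
                smul_eq_mul, mul_one, mul_zero, add_zero, zero_add]
              first
                | exact m1 | exact m1' | exact m2 | exact m2' | exact zero_mem _
  have hsurj : Function.Surjective Φ := by
    rintro ⟨a, b⟩
    obtain ⟨a, rfl⟩ := I₁.mkQ_surjective a
    obtain ⟨b, rfl⟩ := I₂.mkQ_surjective b
    refine ⟨![a, 0, b], ?_⟩
    rw [hΦapp]
    simp
  -- the linear equivalence
  have E : ((Fin 3 → GroupRingZ2) ⧸ imF4) ≃ₗ[GroupRingZ2]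
      (GroupRingZ2 ⧸ I₁) × (GroupRingZ2 ⧸ I₂) :=
    (Submodule.quotEquivOfEq imF4 (LinearMap.ker Φ) hker.symm).trans
      (Φ.quotKerEquivOfSurjective hsurj)
  -- ring equivalences with AR
  have he₁ : Nonempty ((GroupRingZ2 ⧸ I₁) ≃+* AR) := by
    have h := quotRingEquiv (1, 0) (0, 1) (AddMonoidHom.fst ℤ ℤ) (AddMonoidHom.snd ℤ ℤ)
      rfl rfl (by intro g; ext <;> simp)
    exact h
  have he₂ : Nonempty ((GroupRingZ2 ⧸ I₂) ≃+* AR) := by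
    have h := quotRingEquiv (0, 1) (1, 0) (AddMonoidHom.snd ℤ ℤ) (AddMonoidHom.fst ℤ ℤ)
      rfl rfl (by intro g; ext <;> simp)
    obtain ⟨e⟩ := h
    have hswap : I₂ = Ideal.span {1 - AddMonoidAlgebra.single (0,1) 1
        + (AddMonoidAlgebra.single (0,1) (1:ℤ)) ^ 2, 1 - AddMonoidAlgebra.single (1,0) 1} := by
      rw [hI₂]
      show Ideal.span {1 - sGen, 1 - tGen + tGen ^ 2} = Ideal.span {1 - tGen + tGen ^ 2, 1 - sGen}
      rw [Set.pair_comm]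
    exact ⟨(Ideal.quotEquivOfEq hswap).trans e⟩
  obtain ⟨e₁⟩ := he₁
  obtain ⟨e₂⟩ := he₂
  -- basis of AR over ℤ
  have b0 : Module.Basis (Fin 2) ℤ AR :=
    (AdjoinRoot.powerBasis' qPol_monic).basis.reindex (finCongr qPol_natDegree)
  have l₁ : (GroupRingZ2 ⧸ I₁) ≃ₗ[ℤ] AR := e₁.toAddEquiv.toIntLinearEquiv
  have l₂ : (GroupRingZ2 ⧸ I₂) ≃ₗ[ℤ] AR := e₂.toAddEquiv.toIntLinearEquiv
  have bQ : Module.Basis (Fin 2 ⊕ Fin 2) ℤ ((GroupRingZ2 ⧸ I₁) × (GroupRingZ2 ⧸ I₂)) :=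
    (b0.map l₁.symm).prod (b0.map l₂.symm)
  have bM : Module.Basis (Fin 2 ⊕ Fin 2) ℤ ((Fin 3 → GroupRingZ2) ⧸ imF4) :=
    bQ.map (E.restrictScalars ℤ).symm
  refine ⟨⟨E⟩, Module.Free.of_basis bM, ?_⟩
  rw [rank_eq_card_basis bM]
  simp
end

section
/- Let R = ℤ[s, s⁻¹, t, t⁻¹] and consider the free R-module with basis {u, v, w}. The quotient of R·u ⊕ R·v ⊕ R·w by the submodule generated by (1−t)u + (1−t)v + w, (1−s)(u+v), (1−t)v + w, (1−s+s²)u, (1−s+s²)v, and (1+st)w is isomorphic to R/(R(1−s+s²)+R(1−t)); in particular its underlying additive group is free abelian of rank 2. -/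
set_option maxHeartbeats 1000000
set_option synthInstance.maxHeartbeats 400000


/-- The submodule of `R³` generated by the six rows of the second differential for the
Artin group of type `B₄`. -/
noncomputable def imB4 : Submodule GroupRingZ2 (Fin 3 → GroupRingZ2) :=
  Submodule.span GroupRingZ2
    {(1 - tGen) • uV + (1 - tGen) • vV + wV, (1 - sGen) • (uV + vV), (1 - tGen) • vV + wV,
      (1 - sGen + sGen ^ 2) • uV, (1 - sGen + sGen ^ 2) • vV, (1 + sGen * tGen) • wV}

noncomputable def IB4 : Ideal GroupRingZ2 := Ideal.span {1 - sGen + sGen ^ 2, 1 - tGen}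
noncomputable def sInv : GroupRingZ2 := AddMonoidAlgebra.single (-1, 0) 1
noncomputable def sInv2 : GroupRingZ2 := AddMonoidAlgebra.single (-2, 0) 1
noncomputable def tInv : GroupRingZ2 := AddMonoidAlgebra.single (0, -1) 1

lemma sInv2_mul_sq : sInv2 * sGen ^ 2 = 1 := by
  rw [sInv2, sGen, sq, AddMonoidAlgebra.single_mul_single, AddMonoidAlgebra.single_mul_single,
    AddMonoidAlgebra.one_def]
  norm_num; rfl

lemma g1_mem : (1 - tGen) • uV + (1 - tGen) • vV + wV ∈ imB4 :=
  Submodule.subset_span (by simp)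
lemma g2_mem : (1 - sGen) • (uV + vV) ∈ imB4 := Submodule.subset_span (by simp)
lemma g3_mem : (1 - tGen) • vV + wV ∈ imB4 := Submodule.subset_span (by simp)
lemma g4_mem : (1 - sGen + sGen ^ 2) • uV ∈ imB4 := Submodule.subset_span (by simp)
lemma g5_mem : (1 - sGen + sGen ^ 2) • vV ∈ imB4 := Submodule.subset_span (by simp)

lemma ltu_mem : (1 - tGen) • uV ∈ imB4 := by
  have h : (1 - tGen) • uV =
      ((1 - tGen) • uV + (1 - tGen) • vV + wV) - ((1 - tGen) • vV + wV) := by module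
  rw [h]; exact sub_mem g1_mem g3_mem

lemma ltv_mem : (1 - tGen) • vV ∈ imB4 := by
  have h : sGen ^ 2 • ((1 - tGen) • vV) =
      (1 - tGen) • ((1 - sGen + sGen ^ 2) • vV) - (1 - tGen) • ((1 - sGen) • (uV + vV))
        + (1 - sGen) • ((1 - tGen) • uV + (1 - tGen) • vV + wV)
        - (1 - sGen) • ((1 - tGen) • vV + wV) := by module
  have h2 : (1 - tGen) • vV = sInv2 • (sGen ^ 2 • ((1 - tGen) • vV)) := by
    rw [smul_smul, sInv2_mul_sq, one_smul]
  rw [h2, h]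
  exact Submodule.smul_mem _ _ (sub_mem (add_mem (sub_mem
    (Submodule.smul_mem _ _ g5_mem) (Submodule.smul_mem _ _ g2_mem))
    (Submodule.smul_mem _ _ g1_mem)) (Submodule.smul_mem _ _ g3_mem))

lemma w_mem : wV ∈ imB4 := by
  have h : wV = ((1 - tGen) • vV + wV) - (1 - tGen) • vV := by module
  rw [h]; exact sub_mem g3_mem ltv_mem

lemma uv_mem : uV + vV ∈ imB4 := by
  have h : sGen ^ 2 • (uV + vV) =
      (1 - sGen + sGen ^ 2) • uV + (1 - sGen + sGen ^ 2) • vV - (1 - sGen) • (uV + vV) := by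
    module
  have h2 : uV + vV = sInv2 • (sGen ^ 2 • (uV + vV)) := by
    rw [smul_smul, sInv2_mul_sq, one_smul]
  rw [h2, h]
  exact Submodule.smul_mem _ _ (sub_mem (add_mem g4_mem g5_mem) g2_mem)

noncomputable def lsub : (Fin 3 → GroupRingZ2) →ₗ[GroupRingZ2] GroupRingZ2 :=
  (LinearMap.proj (R := GroupRingZ2) (φ := fun _ : Fin 3 => GroupRingZ2) 0) -
    (LinearMap.proj (R := GroupRingZ2) (φ := fun _ : Fin 3 => GroupRingZ2) 1)

noncomputable def phiB4 : (Fin 3 → GroupRingZ2) →ₗ[GroupRingZ2] (GroupRingZ2 ⧸ IB4) :=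
  IB4.mkQ.comp lsub

lemma iS_mem : 1 - sGen + sGen ^ 2 ∈ IB4 := Ideal.subset_span (by simp)
lemma iT_mem : 1 - tGen ∈ IB4 := Ideal.subset_span (by simp)

lemma span_le_ker : imB4 ≤ LinearMap.ker phiB4 := by
  rw [imB4, Submodule.span_le]
  intro x hx
  simp only [Set.mem_insert_iff, Set.mem_singleton_iff] at hx
  have unf : ∀ y : Fin 3 → GroupRingZ2, y ∈ LinearMap.ker phiB4 ↔ lsub y ∈ IB4 := by
    intro y
    rw [LinearMap.mem_ker]
    constructor
    · intro h
      rwa [phiB4, LinearMap.comp_apply, Submodule.mkQ_apply, Submodule.Quotient.mk_eq_zero] at h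
    · intro h
      rw [phiB4, LinearMap.comp_apply, Submodule.mkQ_apply, Submodule.Quotient.mk_eq_zero]
      exact h
  rcases hx with rfl | rfl | rfl | rfl | rfl | rfl
  · rw [SetLike.mem_coe, unf]
    have h : lsub ((1 - tGen) • uV + (1 - tGen) • vV + wV) = 0 := by
      simp [lsub, uV, vV, wV]; try ring
    rw [h]; exact zero_mem _
  · rw [SetLike.mem_coe, unf]
    have h : lsub ((1 - sGen) • (uV + vV)) = 0 := by
      simp [lsub, uV, vV, wV]; try ring
    rw [h]; exact zero_mem _
  · rw [SetLike.mem_coe, unf]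
    have h : lsub ((1 - tGen) • vV + wV) = -(1 - tGen) := by
      simp [lsub, uV, vV, wV]; try ring
    rw [h]; exact neg_mem iT_mem
  · rw [SetLike.mem_coe, unf]
    have h : lsub ((1 - sGen + sGen ^ 2) • uV) = 1 - sGen + sGen ^ 2 := by
      simp [lsub, uV, vV, wV]; try ring
    rw [h]; exact iS_mem
  · rw [SetLike.mem_coe, unf]
    have h : lsub ((1 - sGen + sGen ^ 2) • vV) = -(1 - sGen + sGen ^ 2) := by
      simp [lsub, uV, vV, wV]; try ring
    rw [h]; exact neg_mem iS_mem
  · rw [SetLike.mem_coe, unf]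
    have h : lsub ((1 + sGen * tGen) • wV) = 0 := by
      simp [lsub, uV, vV, wV]; try ring
    rw [h]; exact zero_mem _

lemma ker_le_span : LinearMap.ker phiB4 ≤ imB4 := by
  intro x hx
  have hmem : x 0 - x 1 ∈ IB4 := by
    rw [LinearMap.mem_ker, phiB4, LinearMap.comp_apply, Submodule.mkQ_apply,
      Submodule.Quotient.mk_eq_zero] at hx
    simpa [lsub] using hx
  rw [IB4] at hmem
  obtain ⟨p, q, hpq⟩ := Ideal.mem_span_pair.mp hmem
  have hx' : x = x 2 • wV + x 1 • (uV + vV) +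
      (p • ((1 - sGen + sGen ^ 2) • uV) + q • ((1 - tGen) • uV)) := by
    funext i
    fin_cases i <;>
      simp [uV, vV, wV, Pi.single_apply] <;>
      linear_combination -hpq
  rw [hx']
  exact add_mem (add_mem (Submodule.smul_mem _ _ w_mem) (Submodule.smul_mem _ _ uv_mem))
    (add_mem (Submodule.smul_mem _ _ g4_mem) (Submodule.smul_mem _ _ ltu_mem))

noncomputable def eRM : ((Fin 3 → GroupRingZ2) ⧸ imB4) ≃ₗ[GroupRingZ2] (GroupRingZ2 ⧸ IB4) := by
  refine LinearEquiv.ofBijective (imB4.liftQ phiB4 span_le_ker) ⟨?_, ?_⟩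
  · rw [← LinearMap.ker_eq_bot]
    exact Submodule.ker_liftQ_eq_bot _ _ _ ker_le_span
  · intro y
    obtain ⟨a, rfl⟩ := Submodule.mkQ_surjective _ y
    refine ⟨Submodule.Quotient.mk (a • uV), ?_⟩
    rw [Submodule.liftQ_apply]
    show IB4.mkQ (lsub (a • uV)) = _
    have h : lsub (a • uV) = a := by
      simp [lsub, uV, Pi.single_apply]
    rw [h, Submodule.mkQ_apply]

open Polynomial in
noncomputable def fB4 : ℤ[X] := X ^ 2 - X + 1

open Polynomial in
lemma fB4_monic : fB4.Monic := by unfold fB4; monicity!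

open Polynomial in
lemma fB4_natDegree : fB4.natDegree = 2 := by unfold fB4; compute_degree!

lemma root_rel : (AdjoinRoot.root fB4) ^ 2 - AdjoinRoot.root fB4 + 1 = 0 := by
  have h : AdjoinRoot.mk fB4 (Polynomial.X ^ 2 - Polynomial.X + 1) = 0 := AdjoinRoot.mk_self
  simpa [map_add, map_sub, map_pow, map_one, AdjoinRoot.mk_X] using h

noncomputable def zetaB4 : (AdjoinRoot fB4)ˣ where
  val := AdjoinRoot.root fB4
  inv := 1 - AdjoinRoot.root fB4
  val_inv := by linear_combination -root_rel
  inv_val := by linear_combination -root_rel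

noncomputable def FB4 : Multiplicative (ℤ × ℤ) →* AdjoinRoot fB4 :=
  (Units.coeHom _).comp
    { toFun := fun g => zetaB4 ^ (Multiplicative.toAdd g).1
      map_one' := by simp
      map_mul' := fun a b => by
        show zetaB4 ^ ((Multiplicative.toAdd a).1 + (Multiplicative.toAdd b).1) = _
        rw [zpow_add] }

noncomputable def phiA : GroupRingZ2 →ₐ[ℤ] AdjoinRoot fB4 :=
  AddMonoidAlgebra.lift ℤ _ (ℤ × ℤ) FB4

lemma phiA_s : phiA sGen = AdjoinRoot.root fB4 := by
  rw [phiA, sGen, AddMonoidAlgebra.lift_single]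
  show (1 : ℤ) • ((Units.coeHom _) (zetaB4 ^ (1 : ℤ))) = _
  simp [zetaB4]

lemma phiA_t : phiA tGen = 1 := by
  rw [phiA, tGen, AddMonoidAlgebra.lift_single]
  show (1 : ℤ) • ((Units.coeHom _) (zetaB4 ^ (0 : ℤ))) = _
  simp

lemma phiA_ker : ∀ a ∈ IB4, phiA a = 0 := by
  have h : IB4 ≤ RingHom.ker (phiA : GroupRingZ2 →+* AdjoinRoot fB4) := by
    rw [IB4, Ideal.span_le]
    rintro x hx
    simp only [Set.mem_insert_iff, Set.mem_singleton_iff] at hx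
    rcases hx with rfl | rfl <;>
      · show phiA _ = 0
        simp only [map_add, map_sub, map_pow, map_one, phiA_s, phiA_t]
        try linear_combination root_rel
        try simp
  intro a ha
  exact h ha

noncomputable def e1B4 : (GroupRingZ2 ⧸ IB4) →+* AdjoinRoot fB4 :=
  Ideal.Quotient.lift IB4 (phiA : GroupRingZ2 →+* AdjoinRoot fB4) phiA_ker

open Polynomial in
lemma e2_cond : Polynomial.eval₂ (Int.castRingHom (GroupRingZ2 ⧸ IB4))
    (Ideal.Quotient.mk IB4 sGen) fB4 = 0 := by
  simp only [fB4, eval₂_add, eval₂_sub, eval₂_pow, eval₂_X, eval₂_one]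
  rw [← map_pow, ← map_sub, ← map_one (Ideal.Quotient.mk IB4), ← map_add,
    Ideal.Quotient.eq_zero_iff_mem]
  have h : sGen ^ 2 - sGen + 1 = 1 - sGen + sGen ^ 2 := by ring
  rw [h]; exact iS_mem

noncomputable def e2B4 : AdjoinRoot fB4 →+* (GroupRingZ2 ⧸ IB4) :=
  AdjoinRoot.lift (Int.castRingHom _) (Ideal.Quotient.mk IB4 sGen) e2_cond

lemma e2_root : e2B4 (AdjoinRoot.root fB4) = Ideal.Quotient.mk IB4 sGen :=
  AdjoinRoot.lift_root _

lemma e1_e2 : ∀ a, e1B4 (e2B4 a) = a := by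
  intro a
  induction a using AdjoinRoot.induction_on with
  | ih p =>
    rw [e2B4, AdjoinRoot.lift_mk, Polynomial.hom_eval₂]
    have h1 : e1B4 (Ideal.Quotient.mk IB4 sGen) = AdjoinRoot.root fB4 := by
      exact phiA_s
    have h2 : e1B4.comp (Int.castRingHom (GroupRingZ2 ⧸ IB4)) =
        Int.castRingHom (AdjoinRoot fB4) := Subsingleton.elim _ _
    rw [h1, h2]
    have h3 : Int.castRingHom (AdjoinRoot fB4) = algebraMap ℤ (AdjoinRoot fB4) :=
      Subsingleton.elim _ _
    rw [h3]
    exact AdjoinRoot.aeval_eq p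

lemma mk_t_eq_one : Ideal.Quotient.mk IB4 tGen = 1 := by
  rw [← map_one (Ideal.Quotient.mk IB4), Ideal.Quotient.mk_eq_mk_iff_sub_mem]
  have h : tGen - 1 = -(1 - tGen) := by ring
  rw [h]; exact neg_mem iT_mem

lemma mk_tInv_eq_one : Ideal.Quotient.mk IB4 tInv = 1 := by
  have h : tGen * tInv = 1 := by
    rw [tGen, tInv, AddMonoidAlgebra.single_mul_single, AddMonoidAlgebra.one_def]
    norm_num; rfl
  calc Ideal.Quotient.mk IB4 tInv
      = Ideal.Quotient.mk IB4 tGen * Ideal.Quotient.mk IB4 tInv := by rw [mk_t_eq_one, one_mul]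
    _ = Ideal.Quotient.mk IB4 (tGen * tInv) := by rw [map_mul]
    _ = 1 := by rw [h, map_one]

lemma mk_s_mul_one_sub : Ideal.Quotient.mk IB4 sGen * Ideal.Quotient.mk IB4 (1 - sGen) = 1 := by
  rw [← map_mul, ← map_one (Ideal.Quotient.mk IB4), Ideal.Quotient.mk_eq_mk_iff_sub_mem]
  have h : sGen * (1 - sGen) - 1 = -(1 - sGen + sGen ^ 2) := by ring
  rw [h]; exact neg_mem iS_mem

lemma mk_sInv_eq : Ideal.Quotient.mk IB4 sInv = Ideal.Quotient.mk IB4 (1 - sGen) := by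
  have h : sGen * sInv = 1 := by
    rw [sGen, sInv, AddMonoidAlgebra.single_mul_single, AddMonoidAlgebra.one_def]
    norm_num; rfl
  calc Ideal.Quotient.mk IB4 sInv
      = Ideal.Quotient.mk IB4 sInv * (Ideal.Quotient.mk IB4 sGen
          * Ideal.Quotient.mk IB4 (1 - sGen)) := by rw [mk_s_mul_one_sub, mul_one]
    _ = Ideal.Quotient.mk IB4 (sGen * sInv) * Ideal.Quotient.mk IB4 (1 - sGen) := by
        rw [← map_mul, ← map_mul, ← map_mul]; ring_nf
    _ = Ideal.Quotient.mk IB4 (1 - sGen) := by rw [h, map_one, one_mul]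

lemma mk_s_mem : Ideal.Quotient.mk IB4 sGen ∈ e2B4.range :=
  ⟨AdjoinRoot.root fB4, e2_root⟩

lemma mk_sInv_mem : Ideal.Quotient.mk IB4 sInv ∈ e2B4.range := by
  rw [mk_sInv_eq]
  exact ⟨1 - AdjoinRoot.root fB4, by rw [map_sub, map_one, e2_root, map_sub, map_one]⟩

lemma mk_sPow_mem : ∀ m : ℤ, Ideal.Quotient.mk IB4 (AddMonoidAlgebra.single (m, 0) 1) ∈ e2B4.range := by
  intro m
  induction m using Int.induction_on with
  | zero =>
    rw [show (AddMonoidAlgebra.single ((0 : ℤ), (0 : ℤ)) 1 : GroupRingZ2) = 1 from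
      (AddMonoidAlgebra.one_def).symm, map_one]
    exact one_mem _
  | succ n ih =>
    have h : (AddMonoidAlgebra.single ((n + 1 : ℤ), (0 : ℤ)) 1 : GroupRingZ2) =
        AddMonoidAlgebra.single ((n : ℤ), (0 : ℤ)) 1 * sGen := by
      rw [sGen, AddMonoidAlgebra.single_mul_single]; norm_num
    rw [h, map_mul]
    exact mul_mem ih mk_s_mem
  | pred n ih =>
    have h : (AddMonoidAlgebra.single ((-n - 1 : ℤ), (0 : ℤ)) 1 : GroupRingZ2) =
        AddMonoidAlgebra.single ((-n : ℤ), (0 : ℤ)) 1 * sInv := by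
      rw [sInv, AddMonoidAlgebra.single_mul_single]; norm_num; ring
    rw [h, map_mul]
    exact mul_mem ih mk_sInv_mem

lemma mk_tPow_eq_one : ∀ n : ℤ, Ideal.Quotient.mk IB4 (AddMonoidAlgebra.single ((0 : ℤ), n) 1) = 1 := by
  intro n
  induction n using Int.induction_on with
  | zero =>
    rw [show (AddMonoidAlgebra.single ((0 : ℤ), (0 : ℤ)) 1 : GroupRingZ2) = 1 from
      (AddMonoidAlgebra.one_def).symm, map_one]
  | succ n ih =>
    have h : (AddMonoidAlgebra.single ((0 : ℤ), (n + 1 : ℤ)) 1 : GroupRingZ2) =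
        AddMonoidAlgebra.single ((0 : ℤ), (n : ℤ)) 1 * tGen := by
      rw [tGen, AddMonoidAlgebra.single_mul_single]; norm_num
    rw [h, map_mul, ih, mk_t_eq_one, one_mul]
  | pred n ih =>
    have h : (AddMonoidAlgebra.single ((0 : ℤ), (-n - 1 : ℤ)) 1 : GroupRingZ2) =
        AddMonoidAlgebra.single ((0 : ℤ), (-n : ℤ)) 1 * tInv := by
      rw [tInv, AddMonoidAlgebra.single_mul_single]; norm_num; ring
    rw [h, map_mul, ih, mk_tInv_eq_one, one_mul]

lemma e2_surj : Function.Surjective e2B4 := by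
  intro y
  obtain ⟨x, rfl⟩ := Ideal.Quotient.mk_surjective y
  suffices h : Ideal.Quotient.mk IB4 x ∈ e2B4.range by
    obtain ⟨a, ha⟩ := h
    exact ⟨a, ha⟩
  induction x using AddMonoidAlgebra.induction_on with
  | of g =>
    obtain ⟨m, n⟩ := g
    have h : (AddMonoidAlgebra.of ℤ (ℤ × ℤ) (Multiplicative.ofAdd (m, n))) =
        AddMonoidAlgebra.single (m, (0 : ℤ)) 1 * AddMonoidAlgebra.single ((0 : ℤ), n) 1 := by
      rw [AddMonoidAlgebra.single_mul_single]
      simp [AddMonoidAlgebra.of_apply]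
    rw [h, map_mul, mk_tPow_eq_one, mul_one]
    exact mk_sPow_mem m
  | add f g hf hg => rw [map_add]; exact add_mem hf hg
  | smul r f hf => rw [map_zsmul]; exact zsmul_mem hf r

lemma e2_inj : Function.Injective e2B4 := by
  intro a b h
  rw [← e1_e2 a, ← e1_e2 b, h]

noncomputable def EB4 : AdjoinRoot fB4 ≃+* (GroupRingZ2 ⧸ IB4) :=
  RingEquiv.ofBijective e2B4 ⟨e2_inj, e2_surj⟩

noncomputable def pbB4 : PowerBasis ℤ (AdjoinRoot fB4) := AdjoinRoot.powerBasis' fB4_monic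

noncomputable def eZQ : AdjoinRoot fB4 ≃ₗ[ℤ] (GroupRingZ2 ⧸ IB4) :=
  EB4.toAddEquiv.toIntLinearEquiv

noncomputable def eZM : ((Fin 3 → GroupRingZ2) ⧸ imB4) ≃ₗ[ℤ] (GroupRingZ2 ⧸ IB4) :=
  eRM.restrictScalars ℤ

noncomputable def basisM : Module.Basis (Fin pbB4.dim) ℤ ((Fin 3 → GroupRingZ2) ⧸ imB4) :=
  (pbB4.basis.map eZQ).map eZM.symm

/-- Let `R = ℤ[s,s⁻¹,t,t⁻¹]` and let `u, v, w` be a basis of the free `R`-module `R³`.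
The quotient of `R³` by the submodule generated by `(1−t)u + (1−t)v + w`, `(1−s)(u+v)`,
`(1−t)v + w`, `(1−s+s²)u`, `(1−s+s²)v` and `(1+st)w` is isomorphic to
`R/(R(1−s+s²)+R(1−t))`; in particular its underlying additive group is free abelian of
rank 2.  (Type `B₄`.) -/
theorem quotient_B4 :
    Nonempty
        (((Fin 3 → GroupRingZ2) ⧸ imB4) ≃ₗ[GroupRingZ2]
          (GroupRingZ2 ⧸ Ideal.span {1 - sGen + sGen ^ 2, 1 - tGen})) ∧
      Module.Free ℤ ((Fin 3 → GroupRingZ2) ⧸ imB4) ∧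
      Module.rank ℤ ((Fin 3 → GroupRingZ2) ⧸ imB4) = 2 := by
  refine ⟨⟨eRM⟩, Module.Free.of_basis basisM, ?_⟩
  rw [rank_eq_card_basis basisM]
  have h : pbB4.dim = 2 := by
    rw [pbB4, AdjoinRoot.powerBasis'_dim, fB4_natDegree]
  simp [h]
end
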